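/- Let ℓ be a prime, let R be an 𝔽_ℓ-algebra isomorphic to Mat₂(𝔽_ℓ), and let M be a free left R-module of rank one. Let G be a group acting on R by 𝔽_ℓ-algebra automorphisms and on M by additive automorphisms, compatibly in the sense that g(a·x) = g(a)·g(x) for all g ∈ G, a ∈ R, x ∈ M. Suppose S ⊆ R is a 2-dimensional commutative semisimple 𝔽_ℓ-subalgebra that is stable under the G-action, and suppose there exists a nonzero G-fixed element m ∈ M with S·m = R·m. Then every g ∈ G that fixes S pointwise acts trivially on R. -/

import Mathlib

theorem torus_trick
    (ℓ : ℕ) (hℓ : ℓ.Prime)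
    (R : Type) [Ring R] [Algebra (ZMod ℓ) R]
    (hR : Nonempty (R ≃ₐ[ZMod ℓ] Matrix (Fin 2) (Fin 2) (ZMod ℓ)))
    (M : Type) [AddCommGroup M] [Module R M]
    -- `M` is a free left `R`-module of rank one
    (hfree : Nonempty (M ≃ₗ[R] R))
    (G : Type) [Group G]
    -- `G` acts on `R` by `𝔽ℓ`-algebra automorphisms and on `M` by additive
    -- automorphisms
    (φ : G →* (R ≃ₐ[ZMod ℓ] R)) (ψ : G →* Multiplicative (AddAut M))
    -- compatibility: `g(a·x) = g(a)·g(x)`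
    (hcompat : ∀ (g : G) (r : R) (x : M), Multiplicative.toAdd (ψ g) (r • x) = (φ g r) • (Multiplicative.toAdd (ψ g) x))
    -- `S` is a 2-dimensional commutative semisimple `𝔽ℓ`-subalgebra
    (S : Subalgebra (ZMod ℓ) R)
    (hScomm : ∀ x ∈ S, ∀ y ∈ S, x * y = y * x)
    (hSdim : Module.finrank (ZMod ℓ) S = 2)
    (hSss : ∀ s ∈ S, IsNilpotent s → s = 0)
    -- `S` is `G`-stable
    (hSstable : ∀ (g : G), ∀ s ∈ S, φ g s ∈ S)
    -- `m` is a nonzero `G`-fixed element with `S·m = R·m`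
    (m : M) (hm : m ≠ 0) (hmfix : ∀ g : G, Multiplicative.toAdd (ψ g) m = m)
    (hSm : {x : M | ∃ s ∈ S, s • m = x} = {x : M | ∃ r : R, r • m = x}) :
    -- every `g ∈ G` fixing `S` pointwise acts trivially on `R`
    ∀ g : G, (∀ s ∈ S, φ g s = s) → ∀ r : R, φ g r = r := by
  haveI : Fact ℓ.Prime := ⟨hℓ⟩
  obtain ⟨e⟩ := hR
  intro g hg r
  -- Step 1: `(φ g r) • m = r • m` for all `r`.
  have key : ∀ r : R, (φ g r) • m = r • m := by
    intro r
    have hmem : (r • m) ∈ {x : M | ∃ s ∈ S, s • m = x} := by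
      rw [hSm]; exact ⟨r, rfl⟩
    obtain ⟨s, hs, hsm⟩ := hmem
    calc (φ g r) • m = (φ g r) • (Multiplicative.toAdd (ψ g) m) := by rw [hmfix]
      _ = Multiplicative.toAdd (ψ g) (r • m) := (hcompat g r m).symm
      _ = Multiplicative.toAdd (ψ g) (s • m) := by rw [hsm]
      _ = (φ g s) • (Multiplicative.toAdd (ψ g) m) := hcompat g s m
      _ = s • m := by rw [hg s hs, hmfix]
      _ = r • m := hsm
  -- Step 2: `((φ g r - r) * y) • m = 0` for all `r y`.
  have key2 : ∀ r y : R, ((φ g r - r) * y) • m = 0 := by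
    intro r y
    have h1 : (φ g (r * y)) • m = (r * y) • m := key (r * y)
    have h2 : (φ g r * φ g y) • m = (φ g r * y) • m := by
      rw [mul_smul, mul_smul, key y]
    rw [map_mul] at h1
    have : (φ g r * y) • m = (r * y) • m := h2.symm.trans h1
    rw [sub_mul, sub_smul, this, sub_self]
  -- Step 3: the set of such elements is a two-sided ideal.
  set a : R := φ g r - r with ha
  suffices hsuff : a = 0 by
    have := sub_eq_zero.mp hsuff
    exact this
  by_contra hne
  let J : TwoSidedIdeal R := TwoSidedIdeal.mk'
    {x : R | ∀ y : R, (x * y) • m = 0}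
    (by intro y; simp)
    (by intro x y hx hy z; rw [add_mul, add_smul, hx z, hy z, add_zero])
    (by intro x hx y; rw [neg_mul, neg_smul, hx y, neg_zero])
    (by intro x y hy z; rw [mul_assoc, mul_smul, hy z, smul_zero])
    (by intro x y hx z; rw [mul_assoc]; exact hx (y * z))
  have haJ : a ∈ J := by
    rw [TwoSidedIdeal.mem_mk']
    exact key2 r
  have h1J : (1 : R) ∉ J := by
    rw [TwoSidedIdeal.mem_mk']
    intro h
    exact hm (by simpa using h 1)
  -- Transfer to the matrix ring, which is simple.
  let J' : TwoSidedIdeal (Matrix (Fin 2) (Fin 2) (ZMod ℓ)) :=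
    J.comap (e.symm : Matrix (Fin 2) (Fin 2) (ZMod ℓ) →+* R)
  have haJ' : e a ∈ J' := by
    show e a ∈ J.comap _
    rw [TwoSidedIdeal.mem_comap]
    simpa using haJ
  have hea : e a ≠ 0 := by
    intro h
    exact hne (by simpa using congrArg e.symm h)
  have h1 : (1 : Matrix (Fin 2) (Fin 2) (ZMod ℓ)) ∈ J' :=
    IsSimpleRing.one_mem_of_ne_zero_mem J' hea haJ'
  rw [TwoSidedIdeal.mem_comap] at h1
  simp only [map_one] at h1
  exact h1J h1
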